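/- Let 0 < λ < 1 < μ with (log λ)/(log μ) irrational, let C > 0, let ρ ∈ (0,1), and let (e_j)_{j∈ℕ} be a sequence of reals with |e_j| ≤ ρ^j for every j. Then the closure of the set {C·(1 + e_j)·λ^j·μ^s : j ∈ ℕ, s ∈ ℕ} contains the interval (0, ∞). -/

import Mathlib

/-- From irrationality: there is a nonzero element `a*β + b` of the group
`ℤβ + ℤ` of absolute value less than `δ`. -/
lemma small_elt (β : ℝ) (hβ : Irrational β) (δ : ℝ) (hδ : 0 < δ) :
    ∃ a b : ℤ, a ≠ 0 ∧ (a : ℝ) * β + b ≠ 0 ∧ |(a : ℝ) * β + b| < δ := by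
  set H : AddSubgroup ℝ := AddSubgroup.closure {β} ⊔ AddSubgroup.closure {(1 : ℝ)} with hH
  rcases H.dense_or_cyclic with hd | ⟨g, hg⟩
  · -- dense case: find a small positive element of H
    set η := min δ 1 with hη
    have hη0 : 0 < η := lt_min hδ one_pos
    obtain ⟨h, hhH, hdist⟩ := Metric.mem_closure_iff.1 (hd (η / 2)) (η / 2) (by linarith)
    have hdist' : |η / 2 - h| < η / 2 := by rwa [Real.dist_eq] at hdist
    have h0 : 0 < h := by
      rcases abs_lt.1 hdist' with ⟨h1, h2⟩; linarith
    have hlt : h < η := by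
      rcases abs_lt.1 hdist' with ⟨h1, h2⟩; linarith
    -- decompose h
    rw [hH] at hhH
    rcases (AddSubgroup.mem_sup).1 hhH with ⟨x, hx, y, hy, hxy⟩
    rcases (AddSubgroup.mem_closure_singleton).1 hx with ⟨a, ha⟩
    rcases (AddSubgroup.mem_closure_singleton).1 hy with ⟨b, hb⟩
    have hrep : (a : ℝ) * β + b = h := by
      rw [← hxy, ← ha, ← hb]; push_cast [zsmul_eq_mul]; ring
    have ha0 : a ≠ 0 := by
      rintro rfl
      rw [Int.cast_zero, zero_mul, zero_add] at hrep
      have hb1 : (1 : ℤ) ≤ b := by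
        have : (0 : ℝ) < b := hrep ▸ h0
        exact_mod_cast this
      have : (1 : ℝ) ≤ b := by exact_mod_cast hb1
      have : h < 1 := lt_of_lt_of_le hlt (min_le_right _ _)
      linarith [hrep]
    refine ⟨a, b, ha0, ?_, ?_⟩
    · rw [hrep]; exact ne_of_gt h0
    · rw [hrep, abs_of_pos h0]; exact lt_of_lt_of_le hlt (min_le_left _ _)
  · -- cyclic case: contradiction with irrationality
    exfalso
    have hβH : β ∈ H := by
      apply AddSubgroup.mem_sup_left
      exact AddSubgroup.mem_closure_singleton_self β
    have h1H : (1 : ℝ) ∈ H := by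
      apply AddSubgroup.mem_sup_right
      exact AddSubgroup.mem_closure_singleton_self 1
    rw [hg] at hβH h1H
    rcases (AddSubgroup.mem_closure_singleton).1 hβH with ⟨m, hm⟩
    rcases (AddSubgroup.mem_closure_singleton).1 h1H with ⟨n, hn⟩
    rw [zsmul_eq_mul] at hm hn
    have hn0 : (n : ℝ) ≠ 0 := by
      intro h; rw [h, zero_mul] at hn; exact one_ne_zero hn.symm
    have hg0 : g = 1 / n := by field_simp [hn0]; linarith [hn]
    have : β = (m : ℝ) / n := by rw [← hm, hg0]; ring
    apply hβ
    exact ⟨(m : ℚ) / n, by push_cast [this]; ring⟩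

/-- Given a small nonzero step `g`, multiples `k*g` with `k ≥ N` come within `δ`
of `c + m` for some integer `m`. -/
lemma step_hits (g c : ℝ) (δ : ℝ) (hg : g ≠ 0) (hgδ : |g| < δ) (N : ℕ) :
    ∃ k : ℕ, N ≤ k ∧ ∃ m : ℤ, |(k : ℝ) * g - (c + m)| < δ := by
  rcases hg.lt_or_gt with hneg | hpos
  · -- g < 0
    set m : ℤ := ⌊(N : ℝ) * g - c⌋ with hm
    set r : ℝ := c + m with hr
    have hrle : r ≤ (N : ℝ) * g := by
      have := Int.floor_le ((N : ℝ) * g - c); rw [hr, hm]; linarith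
    have hrg : (N : ℝ) ≤ r / g := by
      rw [le_div_iff_of_neg hneg]; linarith
    set k : ℕ := (⌈r / g⌉).toNat with hk
    have hceil : (N : ℤ) ≤ ⌈r / g⌉ :=
      Int.cast_le.mp (le_trans (by exact_mod_cast hrg : ((N : ℤ) : ℝ) ≤ r / g) (Int.le_ceil _))
    have hkN : N ≤ k := by
      rw [hk]; simpa using Int.toNat_le_toNat hceil
    have hkr : ((k : ℝ)) = (⌈r / g⌉ : ℝ) := by
      rw [hk]; norm_cast; exact Int.toNat_of_nonneg (le_trans (by positivity) hceil)
    have hk1 : r / g ≤ (k : ℝ) := by rw [hkr]; exact Int.le_ceil _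
    have hk2 : (k : ℝ) < r / g + 1 := by rw [hkr]; exact Int.ceil_lt_add_one _
    refine ⟨k, hkN, m, ?_⟩
    have hrg' : r / g * g = r := div_mul_cancel₀ r (ne_of_lt hneg)
    have h1 : (k : ℝ) * g ≤ r := by
      nlinarith [mul_nonneg (sub_nonneg.mpr hk1) (neg_nonneg.mpr hneg.le)]
    have h2 : r + g < (k : ℝ) * g := by
      nlinarith [mul_pos (sub_pos.mpr hk2) (neg_pos.mpr hneg)]
    rw [← hr, abs_sub_lt_iff]
    have habsg : |g| = -g := abs_of_neg hneg
    constructor <;> nlinarith [hgδ]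
  · -- g > 0
    set m : ℤ := ⌈(N : ℝ) * g - c⌉ with hm
    set r : ℝ := c + m with hr
    have hrge : (N : ℝ) * g ≤ r := by
      have := Int.le_ceil ((N : ℝ) * g - c); rw [hr, hm]; linarith
    have hrg : (N : ℝ) ≤ r / g := by rw [le_div_iff₀ hpos]; linarith
    set k : ℕ := (⌈r / g⌉).toNat with hk
    have hceil : (N : ℤ) ≤ ⌈r / g⌉ := by
      exact Int.cast_le.mp (le_trans (by exact_mod_cast hrg : ((N:ℤ):ℝ) ≤ r / g) (Int.le_ceil _))
    have hkN : N ≤ k := by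
      rw [hk]; simpa using Int.toNat_le_toNat hceil
    have hkr : ((k : ℝ)) = (⌈r / g⌉ : ℝ) := by
      rw [hk]; norm_cast; exact Int.toNat_of_nonneg (le_trans (by positivity) hceil)
    have hk1 : r / g ≤ (k : ℝ) := by rw [hkr]; exact Int.le_ceil _
    have hk2 : (k : ℝ) < r / g + 1 := by rw [hkr]; exact Int.ceil_lt_add_one _
    refine ⟨k, hkN, m, ?_⟩
    have h1 : r ≤ (k : ℝ) * g := by
      rw [div_le_iff₀ hpos] at hk1; linarith
    have hrg' : r / g * g = r := div_mul_cancel₀ r (ne_of_gt hpos)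
    have h2 : (k : ℝ) * g < r + g := by
      nlinarith [mul_lt_mul_of_pos_right hk2 hpos]
    rw [← hr, abs_sub_lt_iff]
    have habsg : |g| = g := abs_of_pos hpos
    constructor <;> nlinarith [hgδ]

/-- Key density lemma: for irrational `β`, for any `c`, `δ > 0`, `N`, there are
`j ≥ N` and an integer `s` with `|j β - (c + s)| < δ`. -/
lemma key_dense (β c : ℝ) (hβ : Irrational β) (δ : ℝ) (hδ : 0 < δ) (N : ℕ) :
    ∃ j : ℕ, N ≤ j ∧ ∃ s : ℤ, |(j : ℝ) * β - (c + s)| < δ := by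
  obtain ⟨a, b, ha0, hne, hlt⟩ := small_elt β hβ δ hδ
  -- WLOG a > 0
  obtain ⟨a, b, hapos, hne, hlt⟩ :
      ∃ a b : ℤ, 0 < a ∧ (a : ℝ) * β + b ≠ 0 ∧ |(a : ℝ) * β + b| < δ := by
    rcases ha0.lt_or_gt with h | h
    · refine ⟨-a, -b, by omega, ?_, ?_⟩
      · push_cast; intro hc; apply hne; linarith
      · push_cast; rw [show -(a:ℝ) * β + -b = -((a:ℝ)*β + b) by ring, abs_neg]; exact hlt
    · exact ⟨a, b, h, hne, hlt⟩
  set g : ℝ := (a : ℝ) * β + b with hgdef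
  obtain ⟨k, hkN, m, hkm⟩ := step_hits g c δ hne hlt N
  refine ⟨k * a.toNat, ?_, m - k * b, ?_⟩
  · calc N ≤ k := hkN
      _ ≤ k * a.toNat := Nat.le_mul_of_pos_right k (by omega)
  · have haa : ((a.toNat : ℕ) : ℝ) = (a : ℝ) := by
      exact_mod_cast Int.toNat_of_nonneg hapos.le
    convert hkm using 2
    rw [hgdef]
    push_cast [haa]
    ring

/-- `|log (1+e)| ≤ 2 |e|` for `|e| ≤ 1/2`. -/
lemma abs_log_one_add_le (x : ℝ) (hx : |x| ≤ 1 / 2) : |Real.log (1 + x)| ≤ 2 * |x| := by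
  have h1 : -(1/2 : ℝ) ≤ x := neg_le_of_abs_le hx
  have h2 : x ≤ 1/2 := le_of_abs_le hx
  have hpos : (0 : ℝ) < 1 + x := by linarith
  rw [abs_le]
  constructor
  · -- lower bound: log(1+x) ≥ -2|x|
    have hinv : Real.log (1 + x)⁻¹ ≤ (1 + x)⁻¹ - 1 :=
      Real.log_le_sub_one_of_pos (by positivity)
    rw [Real.log_inv] at hinv
    have : (1 + x)⁻¹ - 1 = -(x / (1 + x)) := by field_simp; ring
    rw [this] at hinv
    have hxx : x / (1 + x) ≤ Real.log (1 + x) := by linarith [hinv]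
    have : -(2 * |x|) ≤ x / (1 + x) := by
      rcases abs_cases x with ⟨he, hx0⟩ | ⟨he, hx0⟩
      · rw [he]
        have hdiv : (0:ℝ) ≤ x / (1 + x) := div_nonneg hx0 hpos.le
        linarith
      · rw [he, le_div_iff₀ hpos]
        nlinarith [mul_nonneg (by linarith : (0:ℝ) ≤ 1 + 2*x) (by linarith : (0:ℝ) ≤ -x)]
    linarith
  · -- upper bound: log(1+x) ≤ x ≤ |x| ≤ 2|x|
    have := Real.log_le_sub_one_of_pos hpos
    have := le_abs_self x
    have := abs_nonneg x
    linarith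

/-- Density with exponentially small multiplicative errors, as in the proof
of Theorem 6.1 of the paper: if `0 < λ < 1 < μ` with `log λ / log μ`
irrational, and `|e_j| ≤ ρ^j`, then the values `C·(1 + e_j)·λ^j·μ^s`
are dense in `(0, ∞)`. -/
theorem dense_orbit_with_errors
    (lam μ C ρ : ℝ)
    (hlam0 : 0 < lam) (hlam1 : lam < 1) (hμ : 1 < μ)
    (hirr : Irrational (Real.log lam / Real.log μ))
    (hC : 0 < C) (hρ0 : 0 < ρ) (hρ1 : ρ < 1)
    (e : ℕ → ℝ) (he : ∀ j, |e j| ≤ ρ ^ j) :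
    Set.Ioi (0 : ℝ) ⊆
      closure {x : ℝ | ∃ j s : ℕ, x = C * (1 + e j) * lam ^ j * μ ^ s} := by
  intro y hy
  rw [Set.mem_Ioi] at hy
  rw [Metric.mem_closure_iff]
  intro ε hε
  -- continuity of exp at log y
  obtain ⟨δ', hδ'0, hδ'⟩ := Metric.continuousAt_iff.1 Real.continuous_exp.continuousAt ε hε
  set L : ℝ := Real.log μ with hL
  set l : ℝ := Real.log lam with hl
  have hLpos : 0 < L := Real.log_pos hμ
  have hlneg : l < 0 := Real.log_neg hlam0 hlam1
  set β : ℝ := -(l / L) with hβdef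
  have hβirr : Irrational β := hirr.neg
  have hβpos : 0 < β := by
    rw [hβdef, neg_pos]
    exact div_neg_of_neg_of_pos hlneg hLpos
  set c : ℝ := (Real.log y - Real.log C) / L with hc
  set δ0 : ℝ := δ' / (2 * L) with hδ0
  have hδ0pos : 0 < δ0 := by positivity
  -- choose N
  obtain ⟨N1, hN1⟩ := exists_pow_lt_of_lt_one (show (0:ℝ) < min (1/2) (δ'/4) by
    apply lt_min <;> positivity) hρ1
  set N2 : ℕ := (⌈(δ0 - c) / β⌉).toNat with hN2
  set N : ℕ := max N1 N2 with hN
  obtain ⟨j, hjN, s, hjs⟩ := key_dense β (-c) hβirr δ0 hδ0pos N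
  -- properties of e j
  have hρj : ρ ^ j ≤ ρ ^ N1 := pow_le_pow_of_le_one hρ0.le hρ1.le (le_trans (le_max_left _ _) hjN)
  have hejhalf : |e j| ≤ 1 / 2 :=
    le_trans (he j) (le_trans hρj (le_of_lt (lt_of_lt_of_le hN1 (min_le_left _ _))))
  have hej4 : |e j| < δ' / 4 :=
    lt_of_le_of_lt (le_trans (he j) hρj) (lt_of_lt_of_le hN1 (min_le_right _ _))
  have h1e : (0 : ℝ) < 1 + e j := by
    have := neg_le_of_abs_le hejhalf; linarith
  -- s is nonnegative
  have hsnn : 0 ≤ s := by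
    have habs := (abs_lt.1 hjs).2
    have hjβ : (N : ℝ) * β ≤ (j : ℝ) * β := by
      apply mul_le_mul_of_nonneg_right _ hβpos.le
      exact_mod_cast hjN
    have hN2le : ((N2 : ℕ) : ℝ) * β ≤ (N : ℝ) * β := by
      apply mul_le_mul_of_nonneg_right _ hβpos.le
      exact_mod_cast le_max_right N1 N2
    have hN2ge : (δ0 - c) / β ≤ (N2 : ℝ) := by
      rw [hN2]
      push_cast
      calc (δ0 - c) / β ≤ (⌈(δ0 - c) / β⌉ : ℝ) := Int.le_ceil _
        _ ≤ ((⌈(δ0 - c) / β⌉).toNat : ℝ) := by exact_mod_cast Int.self_le_toNat _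
    have : δ0 - c ≤ (N2 : ℝ) * β := by
      rw [div_le_iff₀ hβpos] at hN2ge; linarith
    have hs1 : (-1 : ℝ) < (s : ℝ) := by linarith
    have : (-1 : ℤ) < s := by exact_mod_cast hs1
    omega
  -- the candidate point
  set x : ℝ := C * (1 + e j) * lam ^ j * μ ^ s.toNat with hx
  have hxpos : 0 < x := by
    rw [hx]
    have := pow_pos hlam0 j
    have := pow_pos (lt_trans one_pos hμ) s.toNat
    positivity
  refine ⟨x, ⟨j, s.toNat, rfl⟩, ?_⟩
  -- compute log x
  have hlogx : Real.log x = Real.log C + Real.log (1 + e j) + (j : ℝ) * l + (s.toNat : ℝ) * L := by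
    rw [hx, Real.log_mul (by positivity) (by positivity),
      Real.log_mul (by positivity) (by positivity),
      Real.log_mul (ne_of_gt hC) (ne_of_gt h1e), Real.log_pow, Real.log_pow, hl, hL]
  have hstoNat : ((s.toNat : ℕ) : ℝ) = (s : ℝ) := by exact_mod_cast Int.toNat_of_nonneg hsnn
  -- bound |log x - log y|
  have hLβ : L * β = -l := by
    rw [hβdef]; field_simp
  have hLc : L * c = Real.log y - Real.log C := by
    rw [hc]; field_simp
  have hmain : Real.log x - Real.log y
      = Real.log (1 + e j) - L * ((j : ℝ) * β - (-c + s)) := by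
    rw [hlogx, hstoNat]
    linear_combination (j : ℝ) * hLβ + hLc
  have hbound : |Real.log x - Real.log y| < δ' := by
    rw [hmain]
    calc |Real.log (1 + e j) - L * ((j : ℝ) * β - (-c + s))|
        ≤ |Real.log (1 + e j)| + |L * ((j : ℝ) * β - (-c + s))| := abs_sub _ _
      _ < δ' := by
          have h1 : |Real.log (1 + e j)| ≤ 2 * |e j| := abs_log_one_add_le _ hejhalf
          have h2 : |L * ((j : ℝ) * β - (-c + s))| = L * |(j : ℝ) * β - (-c + s)| := by
            rw [abs_mul, abs_of_pos hLpos]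
          have h3 : L * |(j : ℝ) * β - (-c + s)| < L * δ0 :=
            mul_lt_mul_of_pos_left hjs hLpos
          have h4 : L * δ0 = δ' / 2 := by
            rw [hδ0]; field_simp
          rw [h2]
          linarith
  -- conclude via continuity of exp
  have := hδ' (show dist (Real.log x) (Real.log y) < δ' by rwa [Real.dist_eq])
  rw [Real.exp_log hxpos, Real.exp_log hy] at this
  rwa [dist_comm] at this
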